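/- Let a and c be nonzero complex numbers, let ω be a nonreal cube root of unity, and set S₁ = {0}, S₂ = {z ∈ ℂ : a z³ + c = 0} = {(−c/a)^{1/3}, (−c/a)^{1/3}ω, (−c/a)^{1/3}ω²} and S₃ = {∞}. Then for every nonconstant meromorphic function f on ℂ, the function g = ω·f satisfies E_f(S_j, ∞) = E_g(S_j, ∞) for j = 1, 2, 3 (in particular E_f(S₁, 0) = E_g(S₁, 0), E_f(S₂, 3) = E_g(S₂, 3), E_f(S₃, 1) = E_g(S₃, 1)), yet f ≢ g. Hence the hypothesis b ≠ 0 in the three-set uniqueness theorem cannot be removed. -/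

import Mathlib

open Complex Filter MeasureTheory Metric
open scoped Classical

/-- The order of a function at a point, as an integer (`0` if not meromorphic or of
order `⊤`, i.e. identically zero near the point). -/
noncomputable def mOrd (f : ℂ → ℂ) (z : ℂ) : ℤ :=
  if h : MeromorphicAt f z then ((meromorphicOrderAt f z).untopD 0) else 0

/-- Multiplicity of `z` as an `α`-point of `f`. -/
noncomputable def zMult (f : ℂ → ℂ) (α z : ℂ) : ℕ :=
  (mOrd (fun w => f w - α) z).toNat

/-- Multiplicity of `z` as a pole of `f`. -/
noncomputable def pMult (f : ℂ → ℂ) (z : ℂ) : ℕ :=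
  (-(mOrd f z)).toNat

/-- Pointwise contribution of `z` to the multiset `E_f(S, k)`:
an `α`-point (`α ∈ S`) of multiplicity `m` counts `m` times if `m ≤ k`, else `k+1` times. -/
noncomputable def Ecount (f : ℂ → ℂ) (S : Set ℂ) (k : ℕ) (z : ℂ) : ℕ :=
  ∑ᶠ α ∈ S, min (zMult f α z) (k + 1)

/-- `f` and `g` share the set `S ⊆ ℂ` with weight `k`, i.e. `E_f(S,k) = E_g(S,k)`. -/
def EshareEq (f g : ℂ → ℂ) (S : Set ℂ) (k : ℕ) : Prop :=
  ∀ z : ℂ, Ecount f S k z = Ecount g S k z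

/-- `f` and `g` share the set `S ⊆ ℂ` counting multiplicities (weight `∞`). -/
def EshareEqCM (f g : ℂ → ℂ) (S : Set ℂ) : Prop :=
  ∀ z : ℂ, (∑ᶠ α ∈ S, zMult f α z) = ∑ᶠ α ∈ S, zMult g α z

/-- `f` and `g` share `{∞}` with weight `k`. -/
def EpoleEq (f g : ℂ → ℂ) (k : ℕ) : Prop :=
  ∀ z : ℂ, min (pMult f z) (k + 1) = min (pMult g z) (k + 1)

/-- `f` and `g` share `{∞}` counting multiplicities. -/
def EpoleEqCM (f g : ℂ → ℂ) : Prop :=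
  ∀ z : ℂ, pMult f z = pMult g z

/-- Equality of meromorphic functions: `f ≡ g`, i.e. `f = g` off a countable set. -/
def MEq (f g : ℂ → ℂ) : Prop :=
  ∃ D : Set ℂ, D.Countable ∧ ∀ z ∉ D, f z = g z

/-- `f` is a nonconstant meromorphic function in the plane. -/
def MNonconst (f : ℂ → ℂ) : Prop :=
  MeromorphicOn f Set.univ ∧ ¬ ∃ c : ℂ, MEq f (fun _ => c)

/-- The unintegrated counting function of a pointwise (multiplicity) count `w`:
number of points in the closed disc of radius `t`, counted with `w`. -/
noncomputable def ncount (w : ℂ → ℕ) (t : ℝ) : ℕ :=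
  ∑ᶠ z ∈ closedBall (0 : ℂ) t, w z

/-- The integrated counting function associated to an unintegrated one. -/
noncomputable def integN (nf : ℝ → ℕ) (r : ℝ) : ℝ :=
  (∫ t in (0:ℝ)..r, ((nf t : ℝ) - (nf 0 : ℝ)) / t) + (nf 0 : ℝ) * Real.log r

/-- The Nevanlinna integrated counting function `N(r, f)` of the poles of `f`. -/
noncomputable def NN (f : ℂ → ℂ) (r : ℝ) : ℝ :=
  integN (ncount (pMult f)) r

/-- The Nevanlinna proximity function `m(r, f)`. -/
noncomputable def mprox (f : ℂ → ℂ) (r : ℝ) : ℝ :=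
  (2 * Real.pi)⁻¹ *
    ∫ θ in (0:ℝ)..(2 * Real.pi), Real.log (max ‖f (r * Complex.exp (θ * Complex.I))‖ 1)

/-- The Nevanlinna characteristic `T(r, f)`. -/
noncomputable def Tchar (f : ℂ → ℂ) (r : ℝ) : ℝ :=
  mprox f r + NN f r

/-- `u` is a quantity of type `S(r, h)` : `u r = o(T(r, h))` as `r → ∞`, outside a
possible exceptional set of finite linear measure. -/
def SmallWrt (h : ℂ → ℂ) (u : ℝ → ℝ) : Prop :=
  ∃ E : Set ℝ, volume E < ⊤ ∧
    Tendsto (fun r => u r / Tchar h r) (atTop ⊓ Filter.principal Eᶜ) (nhds 0)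



lemma order_const_mul {c : ℂ} (hc : c ≠ 0) {f : ℂ → ℂ} {x : ℂ} (hf : MeromorphicAt f x)
    (hcf : MeromorphicAt (fun w => c * f w) x) :
    meromorphicOrderAt (fun w => c * f w) x = meromorphicOrderAt f x := by
  rcases eq_or_ne (meromorphicOrderAt f x) ⊤ with h | h
  · rw [h, meromorphicOrderAt_eq_top_iff]
    rw [meromorphicOrderAt_eq_top_iff] at h
    filter_upwards [h] with z hz
    simp [hz]
  · obtain ⟨n, hn⟩ := WithTop.ne_top_iff_exists.mp h
    obtain ⟨g, hg, hgx, hfg⟩ := ((meromorphicOrderAt_eq_int_iff (n := n) hf).mp hn.symm)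
    rw [← hn]
    rw [meromorphicOrderAt_eq_int_iff hcf]
    refine ⟨fun w => c * g w, analyticAt_const.mul hg, mul_ne_zero hc hgx, ?_⟩
    filter_upwards [hfg] with w hw
    simp only [hw, smul_eq_mul]
    ring

lemma mOrd_const_mul {c : ℂ} (hc : c ≠ 0) {f : ℂ → ℂ} {z : ℂ} (h1 : MeromorphicAt f z) :
    mOrd (fun w => c * f w) z = mOrd f z := by
  have h2 : MeromorphicAt (fun w => c * f w) z := (MeromorphicAt.const c z).mul h1
  rw [mOrd, mOrd, dif_pos h1, dif_pos h2, order_const_mul hc h1 h2]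

lemma zMult_const_mul {c : ℂ} (hc : c ≠ 0) {f : ℂ → ℂ} (hf : MeromorphicOn f Set.univ)
    (α z : ℂ) : zMult (fun w => c * f w) α z = zMult f (α / c) z := by
  unfold zMult
  congr 1
  have he : (fun w => c * f w - α) = fun w => c * (f w - α / c) := by
    funext w; field_simp
  rw [he]
  exact mOrd_const_mul hc (show MeromorphicAt (fun w => f w - α / c) z from
    (hf z trivial).sub (MeromorphicAt.const _ z))

lemma pMult_const_mul {c : ℂ} (hc : c ≠ 0) {f : ℂ → ℂ} (hf : MeromorphicOn f Set.univ)
    (z : ℂ) : pMult (fun w => c * f w) z = pMult f z := by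
  unfold pMult
  rw [mOrd_const_mul hc (hf z trivial)]

lemma finsum_mem_triple {ρ ω : ℂ} (h1 : ρ ≠ ρ * ω) (h2 : ρ ≠ ρ * ω ^ 2)
    (h3 : ρ * ω ≠ ρ * ω ^ 2) (u : ℂ → ℕ) :
    ∑ᶠ α ∈ ({ρ, ρ * ω, ρ * ω ^ 2} : Set ℂ), u α = u ρ + u (ρ * ω) + u (ρ * ω ^ 2) := by
  have hset : ({ρ, ρ * ω, ρ * ω ^ 2} : Set ℂ) =
      (↑({ρ, ρ * ω, ρ * ω ^ 2} : Finset ℂ) : Set ℂ) := by simp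
  rw [hset, finsum_mem_coe_finset]
  rw [Finset.sum_insert (by simp [h1, h2]), Finset.sum_insert (by simp [h3]),
    Finset.sum_singleton, add_assoc]

/-- **Example 1.3.** The hypothesis `b ≠ 0` cannot be removed: with `S₁ = {0}`,
`S₂ = {z : a z³ + c = 0} = {ρ, ρω, ρω²}` and `S₃ = {∞}`, where `ω` is a nonreal cube
root of unity, the functions `f` and `g = ω f` share each `Sⱼ` counting multiplicities
(hence with weights `(0, 3, 1)`) for every nonconstant meromorphic `f`, yet `f ≢ g`. -/
theorem example_b_zero_fails
    (a c : ℂ) (ha : a ≠ 0) (hc : c ≠ 0)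
    (ω : ℂ) (hω3 : ω ^ 3 = 1) (hω1 : ω ≠ 1)
    (f : ℂ → ℂ) (hf : MNonconst f) :
    (∃ ρ : ℂ, ρ ^ 3 = -c / a ∧
        {z : ℂ | a * z ^ 3 + c = 0} = {ρ, ρ * ω, ρ * ω ^ 2}) ∧
      EshareEqCM f (fun z => ω * f z) {0} ∧
      EshareEqCM f (fun z => ω * f z) {z : ℂ | a * z ^ 3 + c = 0} ∧
      EpoleEqCM f (fun z => ω * f z) ∧
      EshareEq f (fun z => ω * f z) {0} 0 ∧
      EshareEq f (fun z => ω * f z) {z : ℂ | a * z ^ 3 + c = 0} 3 ∧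
      EpoleEq f (fun z => ω * f z) 1 ∧
      ¬ MEq f (fun z => ω * f z) := by
  have hω0 : ω ≠ 0 := by
    intro h; rw [h] at hω3; simp at hω3
  have hsum : ω ^ 2 + ω + 1 = 0 := by
    rcases mul_eq_zero.mp (show (ω - 1) * (ω ^ 2 + ω + 1) = 0 by linear_combination hω3) with
      h | h
    · exact absurd (sub_eq_zero.mp h) hω1
    · exact h
  have hω21 : ω ^ 2 ≠ 1 := fun h => hω1 (by linear_combination hω3 - ω * h)
  have hωω2 : ω ≠ ω ^ 2 := fun h => hω21 (by linear_combination hω3 + ω * h)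
  obtain ⟨ρ, hρ⟩ := IsAlgClosed.exists_pow_nat_eq (-c / a) (n := 3) (by norm_num)
  have hρ0 : ρ ≠ 0 := by
    intro h; rw [h] at hρ
    simp only [zero_pow, ne_eq, OfNat.ofNat_ne_zero, not_false_iff] at hρ
    field_simp at hρ
    exact hc (by simpa using hρ.symm)
  have h1 : ρ ≠ ρ * ω := by
    intro h
    exact hω1 ((mul_right_cancel₀ hρ0 (by linear_combination h)).symm)
  have h2 : ρ ≠ ρ * ω ^ 2 := by
    intro h
    exact hω21 ((mul_right_cancel₀ hρ0 (by linear_combination h)).symm)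
  have h3 : ρ * ω ≠ ρ * ω ^ 2 := by
    intro h
    exact hωω2 (mul_left_cancel₀ hρ0 h)
  have hac : a * ρ ^ 3 = -c := by rw [hρ]; field_simp
  have hprod : ∀ z : ℂ, z ^ 3 - ρ ^ 3 = (z - ρ) * (z - ρ * ω) * (z - ρ * ω ^ 2) := by
    intro z
    linear_combination (ρ * z ^ 2 - ρ ^ 2 * z * ω) * hsum + ρ ^ 3 * hω3
  have hset : {z : ℂ | a * z ^ 3 + c = 0} = {ρ, ρ * ω, ρ * ω ^ 2} := by
    ext z
    simp only [Set.mem_setOf_eq, Set.mem_insert_iff, Set.mem_singleton_iff]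
    constructor
    · intro h
      have hz3 : z ^ 3 - ρ ^ 3 = 0 := by
        have : a * (z ^ 3 - ρ ^ 3) = 0 := by linear_combination h - hac
        exact (mul_eq_zero.mp this).resolve_left ha
      rw [hprod z] at hz3
      rcases mul_eq_zero.mp hz3 with h' | h'
      · rcases mul_eq_zero.mp h' with h'' | h''
        · exact Or.inl (sub_eq_zero.mp h'')
        · exact Or.inr (Or.inl (sub_eq_zero.mp h''))
      · exact Or.inr (Or.inr (sub_eq_zero.mp h'))
    · rintro (rfl | rfl | rfl)
      · linear_combination hac
      · linear_combination ρ ^ 3 * a * hω3 + hac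
      · linear_combination ρ ^ 3 * a * ω ^ 3 * hω3 + ρ ^ 3 * a * hω3 + hac
  have e0 : zMult (fun z => ω * f z) 0 = zMult f 0 := by
    funext z
    rw [zMult_const_mul hω0 hf.1, zero_div]
  have e1 : ∀ z, zMult (fun z => ω * f z) ρ z = zMult f (ρ * ω ^ 2) z := by
    intro z
    rw [zMult_const_mul hω0 hf.1]
    congr 1
    field_simp
    linear_combination -hω3
  have e2 : ∀ z, zMult (fun z => ω * f z) (ρ * ω) z = zMult f ρ z := by
    intro z
    rw [zMult_const_mul hω0 hf.1]
    congr 1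
    field_simp
  have e3 : ∀ z, zMult (fun z => ω * f z) (ρ * ω ^ 2) z = zMult f (ρ * ω) z := by
    intro z
    rw [zMult_const_mul hω0 hf.1]
    congr 1
    field_simp
  refine ⟨⟨ρ, hρ, hset⟩, ?_, ?_, ?_, ?_, ?_, ?_, ?_⟩
  · intro z
    rw [finsum_mem_singleton, finsum_mem_singleton, e0]
  · intro z
    rw [hset, finsum_mem_triple h1 h2 h3, finsum_mem_triple h1 h2 h3, e1, e2, e3]
    omega
  · intro z
    exact (pMult_const_mul hω0 hf.1 z).symm
  · intro z
    unfold Ecount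
    rw [finsum_mem_singleton, finsum_mem_singleton, e0]
  · intro z
    unfold Ecount
    rw [hset, finsum_mem_triple h1 h2 h3 (fun α => min (zMult f α z) (3 + 1)),
      finsum_mem_triple h1 h2 h3 (fun α => min (zMult (fun z => ω * f z) α z) (3 + 1))]
    simp only [e1, e2, e3]
    omega
  · intro z
    rw [pMult_const_mul hω0 hf.1]
  · rintro ⟨D, hD, hEq⟩
    refine hf.2 ⟨0, D, hD, fun z hz => ?_⟩
    have h := hEq z hz
    have : (1 - ω) * f z = 0 := by linear_combination h
    exact (mul_eq_zero.mp this).resolve_left (sub_ne_zero.mpr (Ne.symm hω1))
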